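/- Let f: ℝ² → [K] be the multiclass linear classifier f(x) = argmax_{k∈[K]} w⁽ᵏ⁾·x with w⁽ᵏ⁾ = (cos(2πk/K), sin(2πk/K)), and let p(x,y) = (x+iy)^a (x−iy)^b with a, b nonnegative integers, a ≠ b. Then the vector v ∈ ℂᴷ with v_j = E_{(x,y)∼N(0,I₂)}[p(x,y) 1(f(x,y)=j)] satisfies v_{(j+1) mod K} = v_j · e^{2πi(a−b)/K} for all j, i.e. v is a scalar multiple of the root-of-unity vector ω^{(a−b)}. Moreover, if a = b then the analogously centered correlation vector is zero. -/

import Mathlib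

open MeasureTheory ProbabilityTheory

/-- The standard Gaussian measure on `ℝ²`. -/
noncomputable def gauss2 : Measure (ℝ × ℝ) :=
  (gaussianReal 0 1).prod (gaussianReal 0 1)

/-- The correlation vector `v_j = E[(x+iy)^a (x-iy)^b 1(f(x,y)=j)]`. -/
noncomputable def sectorMoment {K : ℕ} (f : ℝ × ℝ → Fin K) (a b : ℕ) (j : Fin K) : ℂ :=
  ∫ z, ((z.1 : ℂ) + Complex.I * z.2) ^ a * ((z.1 : ℂ) - Complex.I * z.2) ^ b *
    (if f z = j then 1 else 0) ∂gauss2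

section Aux
open Real

/-- Rotation of the plane by angle `α`, as a measurable equivalence. -/
noncomputable def rotEquiv (α : ℝ) : (ℝ × ℝ) ≃ᵐ (ℝ × ℝ) :=
  (Complex.measurableEquivRealProd.symm.trans
    (rotation (Circle.exp α)).toMeasurableEquiv).trans Complex.measurableEquivRealProd

lemma rotEquiv_apply (α : ℝ) (z : ℝ × ℝ) :
    rotEquiv α z = (Real.cos α * z.1 - Real.sin α * z.2,
                    Real.sin α * z.1 + Real.cos α * z.2) := by
  simp [rotEquiv, MeasurableEquiv.trans_apply, Complex.measurableEquivRealProd,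
    Complex.equivRealProd, rotation_apply, Circle.coe_exp, Complex.exp_mul_I,
    Complex.ext_iff, Complex.add_re, Complex.mul_re, Complex.mul_im,
    Complex.cos_ofReal_re, Complex.sin_ofReal_re]
  ring

lemma rotEquiv_volume (α : ℝ) :
    MeasurePreserving (rotEquiv α) (volume : Measure (ℝ × ℝ)) volume := by
  exact (Complex.volume_preserving_equiv_real_prod).comp
    (((rotation (Circle.exp α)).measurePreserving).comp
      Complex.volume_preserving_equiv_real_prod.symm)

lemma gauss2_eq_withDensity :
    gauss2 = (volume : Measure (ℝ × ℝ)).withDensity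
      (fun z => gaussianPDF 0 1 z.1 * gaussianPDF 0 1 z.2) := by
  rw [gauss2]
  refine Measure.prod_eq fun s t hs ht => ?_
  rw [Measure.volume_eq_prod, withDensity_apply _ (hs.prod ht), ← Measure.prod_restrict,
    lintegral_prod_mul (measurable_gaussianPDF 0 1).aemeasurable (measurable_gaussianPDF 0 1).aemeasurable,
    gaussianReal_of_var_ne_zero 0 one_ne_zero, withDensity_apply _ hs, withDensity_apply _ ht]

lemma pdf_rot (α x y : ℝ) :
    gaussianPDF 0 1 (Real.cos α * x - Real.sin α * y) *
      gaussianPDF 0 1 (Real.sin α * x + Real.cos α * y) =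
    gaussianPDF 0 1 x * gaussianPDF 0 1 y := by
  have h : ∀ u v : ℝ, gaussianPDF 0 1 u * gaussianPDF 0 1 v
      = ENNReal.ofReal (gaussianPDFReal 0 1 u * gaussianPDFReal 0 1 v) := fun u v =>
    (ENNReal.ofReal_mul (gaussianPDFReal_nonneg 0 1 u)).symm
  rw [h, h]
  congr 1
  simp only [gaussianPDFReal, NNReal.coe_one, mul_one, sub_zero]
  have hexp : ∀ u v : ℝ, (Real.sqrt (2*π))⁻¹ * Real.exp u * ((Real.sqrt (2*π))⁻¹ * Real.exp v)
      = (Real.sqrt (2*π))⁻¹ * (Real.sqrt (2*π))⁻¹ * Real.exp (u+v) := by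
    intro u v; rw [Real.exp_add]; ring
  rw [hexp, hexp]
  have harg : -(Real.cos α * x - Real.sin α * y) ^ 2 / 2 + -(Real.sin α * x + Real.cos α * y) ^ 2 / 2
      = -x ^ 2 / 2 + -y ^ 2 / 2 := by
    linear_combination (-(x^2+y^2)/2) * (Real.sin_sq_add_cos_sq α)
  rw [harg]

lemma gauss2_rot (α : ℝ) : MeasurePreserving (rotEquiv α) gauss2 gauss2 := by
  refine ⟨(rotEquiv α).measurable, ?_⟩
  ext s hs
  set D : ℝ × ℝ → ENNReal := fun z => gaussianPDF 0 1 z.1 * gaussianPDF 0 1 z.2 with hD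
  have hDm : Measurable D := ((measurable_gaussianPDF 0 1).comp measurable_fst).mul
    ((measurable_gaussianPDF 0 1).comp measurable_snd)
  have hDR : ∀ z, D (rotEquiv α z) = D z := by
    intro z
    rw [rotEquiv_apply]
    exact pdf_rot α z.1 z.2
  rw [Measure.map_apply (rotEquiv α).measurable hs, gauss2_eq_withDensity,
    withDensity_apply _ ((rotEquiv α).measurable hs), withDensity_apply _ hs,
    ← lintegral_indicator ((rotEquiv α).measurable hs) D, ← lintegral_indicator hs D]
  have key : ∀ z, (rotEquiv α ⁻¹' s).indicator D z = s.indicator D (rotEquiv α z) := by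
    intro z
    by_cases hz : rotEquiv α z ∈ s
    · simp [Set.indicator, hz, hDR]
    · simp [Set.indicator, hz]
  simp_rw [key]
  exact (rotEquiv_volume α).lintegral_comp (hDm.indicator hs)

/-- angle of class k -/
noncomputable def secAngle (K : ℕ) (k : Fin K) : ℝ := 2 * π * ((k : ℕ) : ℝ) / K

lemma secAngle_succ {K : ℕ} [NeZero K] (k : Fin K) (g : ℝ → ℝ)
    (hg : Function.Periodic g (2 * π)) :
    g (secAngle K (k + 1)) = g (secAngle K k + 2 * π / K) := by
  have hK : (K : ℝ) ≠ 0 := Nat.cast_ne_zero.mpr (NeZero.ne K)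
  have hv : ((k + 1 : Fin K) : ℕ) = ((k : ℕ) + 1) % K := by
    rw [Fin.val_add, Fin.val_one']
    conv_rhs => rw [Nat.add_mod, Nat.mod_eq_of_lt k.isLt]
  have hdm := Nat.div_add_mod ((k : ℕ) + 1) K
  set q : ℕ := ((k : ℕ) + 1) / K with hq
  have h1 : ((((k : ℕ) + 1) % K : ℕ) : ℝ) = ((k : ℕ) + 1 : ℝ) - K * q := by
    have := congrArg (fun n : ℕ => (n : ℝ)) hdm
    push_cast at this ⊢
    linarith
  have h2 : secAngle K (k + 1) = (secAngle K k + 2 * π / K) - q * (2 * π) := by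
    rw [secAngle, hv, h1, secAngle]
    field_simp
  rw [h2, hg.sub_nat_mul_eq]

lemma w_rot {K : ℕ} [NeZero K] (k : Fin K) (z : ℝ × ℝ) :
    Real.cos (secAngle K (k + 1)) * (rotEquiv (2 * π / K) z).1 +
      Real.sin (secAngle K (k + 1)) * (rotEquiv (2 * π / K) z).2 =
    Real.cos (secAngle K k) * z.1 + Real.sin (secAngle K k) * z.2 := by
  rw [rotEquiv_apply, secAngle_succ k _ Real.cos_periodic, secAngle_succ k _ Real.sin_periodic]
  simp only [Real.cos_add, Real.sin_add]
  linear_combination (Real.cos (secAngle K k) * z.1 + Real.sin (secAngle K k) * z.2) *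
    (Real.sin_sq_add_cos_sq (2 * π / K))

lemma line_null (A B : ℝ) (h : ¬(A = 0 ∧ B = 0)) :
    (volume : Measure (ℝ × ℝ)) {z : ℝ × ℝ | A * z.1 + B * z.2 = 0} = 0 := by
  set φ : (ℝ × ℝ) →ₗ[ℝ] ℝ := A • (LinearMap.fst ℝ ℝ ℝ) + B • (LinearMap.snd ℝ ℝ ℝ) with hφ
  have hset : {z : ℝ × ℝ | A * z.1 + B * z.2 = 0} = (LinearMap.ker φ : Set (ℝ × ℝ)) := by
    ext z
    simp [hφ, LinearMap.mem_ker, smul_eq_mul]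
  rw [hset]
  refine Measure.addHaar_submodule _ _ ?_
  intro htop
  have h0 : φ = 0 := LinearMap.ker_eq_top.mp htop
  have : A * A + B * B = 0 := by
    have := congrArg (fun ψ : (ℝ × ℝ) →ₗ[ℝ] ℝ => ψ (A, B)) h0
    simpa [hφ, smul_eq_mul] using this
  exact h ⟨by nlinarith, by nlinarith⟩

lemma angle_inj {K : ℕ} [NeZero K] (k k' : Fin K)
    (hc : Real.cos (secAngle K k) = Real.cos (secAngle K k'))
    (hs : Real.sin (secAngle K k) = Real.sin (secAngle K k')) :
    k = k' := by
  have hK : (K : ℝ) ≠ 0 := Nat.cast_ne_zero.mpr (NeZero.ne K)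
  set θ : ℝ := secAngle K k with hθ
  set θ' : ℝ := secAngle K k' with hθ'
  have hx : Complex.exp (θ * Complex.I) = Complex.exp (θ' * Complex.I) := by
    rw [Complex.exp_mul_I, Complex.exp_mul_I, ← Complex.ofReal_cos, ← Complex.ofReal_cos,
      ← Complex.ofReal_sin, ← Complex.ofReal_sin, hc, hs]
  obtain ⟨n, hn⟩ := Complex.exp_eq_exp_iff_exists_int.mp hx
  have hC : (θ : ℂ) = θ' + n * (2 * π) := by
    have h2 : ((θ' : ℂ) + n * (2 * π)) * Complex.I = θ * Complex.I := by
      rw [hn]; ring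
    have := mul_right_cancel₀ Complex.I_ne_zero h2
    rw [this]
  have hR : θ = θ' + n * (2 * π) := by exact_mod_cast hC
  have hval : ((k : ℕ) : ℝ) = ((k' : ℕ) : ℝ) + n * K := by
    rw [hθ, hθ', secAngle, secAngle] at hR
    have hπ : (2 * π : ℝ) ≠ 0 := by positivity
    field_simp at hR
    have h2 : 2 * π * ((k : ℕ) : ℝ) = 2 * π * (((k' : ℕ) : ℝ) + n * K) := by rw [hR]; ring
    exact mul_left_cancel₀ hπ h2
  have hvalZ : ((k : ℕ) : ℤ) = ((k' : ℕ) : ℤ) + n * K := by exact_mod_cast hval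
  have hdvd : (K : ℤ) ∣ ((k : ℕ) : ℤ) - ((k' : ℕ) : ℤ) := ⟨n, by rw [hvalZ]; ring⟩
  have habs : |((k : ℕ) : ℤ) - ((k' : ℕ) : ℤ)| < K := by
    have h1 := k.isLt; have h2 := k'.isLt
    rw [abs_sub_lt_iff]; omega
  have := Int.eq_zero_of_abs_lt_dvd hdvd habs
  have : (k : ℕ) = (k' : ℕ) := by omega
  exact Fin.ext this


section Aux2
open Real

lemma ae_shift {K : ℕ} [NeZero K] (f : ℝ × ℝ → Fin K)
    (hf : ∀ z : ℝ × ℝ, ∀ k : Fin K,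
      Real.cos (secAngle K k) * z.1 + Real.sin (secAngle K k) * z.2 ≤
        Real.cos (secAngle K (f z)) * z.1 + Real.sin (secAngle K (f z)) * z.2) :
    ∀ᵐ z ∂gauss2, f (rotEquiv (2 * Real.pi / K) z) = f z + 1 := by
  have hAC : gauss2 ≪ (volume : Measure (ℝ × ℝ)) := by
    rw [gauss2_eq_withDensity]; exact withDensity_absolutelyContinuous _ _
  set N : Set (ℝ × ℝ) := ⋃ (k : Fin K), ⋃ (k' : Fin K),
    {z : ℝ × ℝ | k ≠ k' ∧ (Real.cos (secAngle K k) - Real.cos (secAngle K k')) * z.1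
      + (Real.sin (secAngle K k) - Real.sin (secAngle K k')) * z.2 = 0} with hN
  have hNnull : gauss2 N = 0 := by
    refine measure_iUnion_null fun k => measure_iUnion_null fun k' => ?_
    by_cases hkk : k = k'
    · exact measure_mono_null (fun z hz => (hz.1 hkk).elim) measure_empty
    · refine measure_mono_null (fun z hz => hz.2) (hAC (line_null _ _ ?_))
      rintro ⟨hc0, hs0⟩
      exact hkk (angle_inj k k' (by linarith) (by linarith))
  have hae : ∀ᵐ z ∂gauss2, z ∉ N := measure_eq_zero_iff_ae_notMem.mp hNnull
  filter_upwards [hae] with z hz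
  set w : Fin K → ℝ × ℝ → ℝ :=
    fun k y => Real.cos (secAngle K k) * y.1 + Real.sin (secAngle K k) * y.2 with hw
  set Rz := rotEquiv (2 * π / K) z with hRz
  set j : Fin K := f Rz with hj
  have h1 : w (f z) z ≤ w (j - 1) z := by
    have e1 : w (f z + 1) Rz = w (f z) z := w_rot (f z) z
    have e2 : w ((j - 1) + 1) Rz = w (j - 1) z := w_rot (j - 1) z
    rw [sub_add_cancel] at e2
    calc w (f z) z = w (f z + 1) Rz := e1.symm
      _ ≤ w j Rz := hf Rz (f z + 1)
      _ = w (j - 1) z := e2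
  have h2 : w (j - 1) z ≤ w (f z) z := hf z (j - 1)
  have heq : w (j - 1) z = w (f z) z := le_antisymm h2 h1
  have hjf : j - 1 = f z := by
    by_contra hne
    apply hz
    refine Set.mem_iUnion.mpr ⟨j - 1, Set.mem_iUnion.mpr ⟨f z, ⟨hne, ?_⟩⟩⟩
    have : w (j - 1) z - w (f z) z = 0 := by rw [heq]; ring
    rw [hw] at this
    simp only at this
    linarith [this]
  calc f Rz = j := rfl
    _ = (j - 1) + 1 := by rw [sub_add_cancel]
    _ = f z + 1 := by rw [hjf]

end Aux2

section Aux3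
open Real

lemma sector_step {K : ℕ} [NeZero K] (f : ℝ × ℝ → Fin K)
    (hf : ∀ z : ℝ × ℝ, ∀ k : Fin K,
      Real.cos (secAngle K k) * z.1 + Real.sin (secAngle K k) * z.2 ≤
        Real.cos (secAngle K (f z)) * z.1 + Real.sin (secAngle K (f z)) * z.2)
    (a b : ℕ) (j : Fin K) :
    sectorMoment f a b (j + 1) =
      sectorMoment f a b j *
        Complex.exp (2 * (Real.pi : ℂ) * Complex.I * ((a : ℂ) - (b : ℂ)) / (K : ℂ)) := by
  have hK : (K : ℂ) ≠ 0 := Nat.cast_ne_zero.mpr (NeZero.ne K)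
  set α : ℝ := 2 * π / K with hα
  set c : ℂ := Complex.exp ((α : ℂ) * Complex.I) with hc
  set c' : ℂ := Complex.exp (-(α : ℂ) * Complex.I) with hc'
  set P : ℝ × ℝ → ℂ :=
    fun z => ((z.1 : ℂ) + Complex.I * z.2) ^ a * ((z.1 : ℂ) - Complex.I * z.2) ^ b with hP
  have hcexp : c = ((Real.cos α : ℝ) : ℂ) + ((Real.sin α : ℝ) : ℂ) * Complex.I := by
    rw [hc, Complex.exp_mul_I, Complex.ofReal_cos, Complex.ofReal_sin]
  have hcexp' : c' = ((Real.cos α : ℝ) : ℂ) - ((Real.sin α : ℝ) : ℂ) * Complex.I := by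
    rw [hc', Complex.exp_mul_I, Complex.cos_neg, Complex.sin_neg, Complex.ofReal_cos,
      Complex.ofReal_sin]
    ring
  have hcomp : sectorMoment f a b (j + 1) =
      ∫ z, P (rotEquiv α z) * (if f (rotEquiv α z) = j + 1 then 1 else 0) ∂gauss2 := by
    rw [sectorMoment]
    exact ((gauss2_rot α).integral_comp (rotEquiv α).measurableEmbedding _).symm
  rw [hcomp]
  have hae := ae_shift f hf
  have hstep : ∫ z, P (rotEquiv α z) * (if f (rotEquiv α z) = j + 1 then 1 else 0) ∂gauss2
      = ∫ z, (c ^ a * c' ^ b) * (P z * (if f z = j then 1 else 0)) ∂gauss2 := by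
    refine integral_congr_ae ?_
    filter_upwards [hae] with z hz
    rw [hz]
    have hplus : ((rotEquiv α z).1 : ℂ) + Complex.I * (rotEquiv α z).2
        = c * ((z.1 : ℂ) + Complex.I * z.2) := by
      rw [rotEquiv_apply, hcexp]
      simp only [Complex.ofReal_sub, Complex.ofReal_add, Complex.ofReal_mul]
      linear_combination (-(Real.sin α : ℂ) * (z.2 : ℂ)) * Complex.I_sq
    have hminus : ((rotEquiv α z).1 : ℂ) - Complex.I * (rotEquiv α z).2
        = c' * ((z.1 : ℂ) - Complex.I * z.2) := by
      rw [rotEquiv_apply, hcexp']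
      simp only [Complex.ofReal_sub, Complex.ofReal_add, Complex.ofReal_mul]
      linear_combination (-(Real.sin α : ℂ) * (z.2 : ℂ)) * Complex.I_sq
    have hif : (if f z + 1 = j + 1 then (1 : ℂ) else 0) = (if f z = j then 1 else 0) := by
      simp [add_left_inj]
    rw [hP]
    simp only
    rw [hplus, hminus, hif, mul_pow, mul_pow]
    ring
  rw [hstep, integral_const_mul]
  have hfac : c ^ a * c' ^ b
      = Complex.exp (2 * (Real.pi : ℂ) * Complex.I * ((a : ℂ) - (b : ℂ)) / (K : ℂ)) := by
    rw [hc, hc', ← Complex.exp_nat_mul, ← Complex.exp_nat_mul, ← Complex.exp_add]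
    congr 1
    have hαc : ((α : ℝ) : ℂ) = 2 * (Real.pi : ℂ) / (K : ℂ) := by
      rw [hα]; push_cast; ring
    rw [hαc]
    field_simp
    ring
  rw [hfac, sectorMoment]
  ring

end Aux3

theorem sector_moment_root_of_unity {K : ℕ} [NeZero K] (f : ℝ × ℝ → Fin K)
    (hfm : Measurable f)
    (hf : ∀ z : ℝ × ℝ, ∀ k : Fin K,
      Real.cos (2 * Real.pi * ((k : ℕ) : ℝ) / K) * z.1 +
          Real.sin (2 * Real.pi * ((k : ℕ) : ℝ) / K) * z.2 ≤
        Real.cos (2 * Real.pi * (((f z) : ℕ) : ℝ) / K) * z.1 +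
          Real.sin (2 * Real.pi * (((f z) : ℕ) : ℝ) / K) * z.2)
    (a b : ℕ) :
    (a ≠ b → ∀ j : Fin K,
      sectorMoment f a b (j + 1) =
        sectorMoment f a b j *
          Complex.exp (2 * (Real.pi : ℂ) * Complex.I * ((a : ℂ) - (b : ℂ)) / (K : ℂ))) ∧
    (a = b → ∀ j : Fin K,
      sectorMoment f a b j =
        (∫ z, ((z.1 : ℂ) + Complex.I * z.2) ^ a * ((z.1 : ℂ) - Complex.I * z.2) ^ b ∂gauss2) /
          (K : ℂ)) := by
  have hf' : ∀ z : ℝ × ℝ, ∀ k : Fin K,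
      Real.cos (secAngle K k) * z.1 + Real.sin (secAngle K k) * z.2 ≤
        Real.cos (secAngle K (f z)) * z.1 + Real.sin (secAngle K (f z)) * z.2 := hf
  refine ⟨fun _ j => sector_step f hf' a b j, ?_⟩
  intro hab j
  subst hab
  have hK : (K : ℂ) ≠ 0 := Nat.cast_ne_zero.mpr (NeZero.ne K)
  set P : ℝ × ℝ → ℂ :=
    fun z => ((z.1 : ℂ) + Complex.I * z.2) ^ a * ((z.1 : ℂ) - Complex.I * z.2) ^ a with hP
  have hstep : ∀ j' : Fin K, sectorMoment f a a (j' + 1) = sectorMoment f a a j' := by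
    intro j'
    rw [sector_step f hf' a a j']
    simp
  open Fin.NatCast in
  have hconst : ∀ j' : Fin K, sectorMoment f a a j' = sectorMoment f a a 0 := by
    have hnat : ∀ n : ℕ, sectorMoment f a a ((0 : Fin K) + (n : Fin K)) = sectorMoment f a a 0 := by
      intro n
      induction n with
      | zero => simp
      | succ n ih =>
        have hcast : ((n + 1 : ℕ) : Fin K) = (n : Fin K) + 1 := by push_cast; ring
        rw [hcast, ← add_assoc, hstep, ih]
    intro j'
    have := hnat (j' : ℕ)
    rwa [Fin.cast_val_eq_self, zero_add] at this
  have hPm : Measurable P := by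
    apply Measurable.mul <;> apply Measurable.pow _ measurable_const
    · exact (Complex.measurable_ofReal.comp measurable_fst).add
        (measurable_const.mul (Complex.measurable_ofReal.comp measurable_snd))
    · exact (Complex.measurable_ofReal.comp measurable_fst).sub
        (measurable_const.mul (Complex.measurable_ofReal.comp measurable_snd))
  have hχm : ∀ j' : Fin K, Measurable (fun z => if f z = j' then (1 : ℂ) else 0) := by
    intro j'
    exact Measurable.ite (hfm (measurableSet_singleton j')) measurable_const measurable_const
  have hsum_pt : ∀ z, ∑ j' : Fin K, P z * (if f z = j' then (1 : ℂ) else 0) = P z := by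
    intro z
    rw [← Finset.mul_sum]
    have : ∑ j' : Fin K, (if f z = j' then (1 : ℂ) else 0) = 1 := by
      rw [Finset.sum_ite_eq Finset.univ (f z) (fun _ => (1 : ℂ))]
      simp
    rw [this, mul_one]
  have hmom : ∀ j' : Fin K, sectorMoment f a a j'
      = ∫ z, P z * (if f z = j' then (1 : ℂ) else 0) ∂gauss2 := fun _ => rfl
  by_cases hint : Integrable P gauss2
  · have hpiece : ∀ j' : Fin K,
        Integrable (fun z => P z * (if f z = j' then (1 : ℂ) else 0)) gauss2 := by
      intro j'
      refine hint.mono ((hPm.mul (hχm j')).aestronglyMeasurable) (ae_of_all _ fun z => ?_)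
      by_cases h : f z = j' <;> simp [h]
    have hsum : ∑ j' : Fin K, sectorMoment f a a j' = ∫ z, P z ∂gauss2 := by
      simp_rw [hmom]
      rw [← integral_finset_sum _ (fun j' _ => hpiece j')]
      congr 1
      funext z
      exact hsum_pt z
    have hsumc : ∑ j' : Fin K, sectorMoment f a a j' = (K : ℂ) * sectorMoment f a a 0 := by
      calc ∑ j' : Fin K, sectorMoment f a a j' = ∑ _j' : Fin K, sectorMoment f a a 0 :=
            Finset.sum_congr rfl (fun j' _ => hconst j')
        _ = (K : ℂ) * sectorMoment f a a 0 := by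
            rw [Finset.sum_const, Finset.card_univ, Fintype.card_fin, nsmul_eq_mul]
    rw [hconst j, eq_div_iff hK, mul_comm]
    rw [← hsumc, hsum]
  · have hnall : ¬ ∀ j' : Fin K,
        Integrable (fun z => P z * (if f z = j' then (1 : ℂ) else 0)) gauss2 := by
      intro hall
      apply hint
      have hPe : P = fun z => ∑ j' : Fin K, P z * (if f z = j' then (1 : ℂ) else 0) := by
        funext z; rw [hsum_pt z]
      rw [hPe]
      exact integrable_finset_sum _ (fun j' _ => hall j')
    obtain ⟨j₀, hj₀⟩ := not_forall.mp hnall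
    have hv0 : sectorMoment f a a j₀ = 0 := by
      rw [hmom j₀]; exact integral_undef hj₀
    have hI0 : ∫ z, P z ∂gauss2 = 0 := integral_undef hint
    rw [hconst j, ← hconst j₀, hv0, hP] at *
    rw [hI0]
    simp
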